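/- Approximate conditional independence is invariant under expectation-equivalence: if U is approximately conditionally independent of V given V' with respect to a nonstandard probability measure ν, and ν ≈ ν', then U is approximately conditionally independent of V given V' with respect to ν'. -/

import Mathlib

attribute [local instance] Classical.propDecidable

lemma ind_preimage_mem {W : Type*} {F : Set (Set W)}
    (huniv : Set.univ ∈ F) (hcompl : ∀ U ∈ F, Uᶜ ∈ F)
    (hunion : ∀ U ∈ F, ∀ V ∈ F, U ∪ V ∈ F)
    {A : Set W} (hA : A ∈ F) (p : ℝ) (x : ℝ) :
    (fun w => if w ∈ A then p else 0) ⁻¹' {x} ∈ F := by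
  have hempty : (∅ : Set W) ∈ F := by simpa using hcompl _ huniv
  have heq : (fun w => if w ∈ A then p else 0) ⁻¹' {x}
      = (if p = x then A else ∅) ∪ (if x = 0 then Aᶜ else ∅) := by
    ext w
    by_cases hw : w ∈ A <;> split_ifs <;> simp_all (config := {decide := false}) <;> tauto
  rw [heq]
  refine hunion _ ?_ _ ?_ <;> split_ifs <;> first | exact hA | exact hcompl _ hA | exact hempty

lemma sum_ind {W K : Type*} [Field K] [LinearOrder K] [IsStrictOrderedRing K] (ι : ℝ →+* K)
    (ν : Set W → K) (hempty : ν ∅ = 0)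
    (A : Set W) (p : ℝ) (s : Finset ℝ) (hps : p ∈ s) :
    ∑ x ∈ s, ι x * ν ((fun w => if w ∈ A then p else 0) ⁻¹' {x}) = ι p * ν A := by
  rw [Finset.sum_eq_single_of_mem p hps]
  · by_cases hp : p = 0
    · simp [hp]
    · have : (fun w => if w ∈ A then p else 0) ⁻¹' {p} = A := by
        ext w; by_cases hw : w ∈ A <;> simp [hw, hp, Ne.symm hp]
      rw [this]
  · intro b hb hbp
    by_cases hb0 : b = 0
    · simp [hb0]
    · have : (fun w => if w ∈ A then p else 0) ⁻¹' {b} = ∅ := by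
        ext w; by_cases hw : w ∈ A <;> simp [hw, Ne.symm hbp, Ne.symm hb0]
      rw [this, hempty, mul_zero]

lemma ind_range {W : Type*} (A : Set W) (p : ℝ) (s : Finset ℝ)
    (hps : p ∈ s) (h0s : (0:ℝ) ∈ s) :
    Set.range (fun w => if w ∈ A then p else 0) ⊆ ↑s := by
  rintro x ⟨w, rfl⟩
  by_cases hw : w ∈ A <;> simp [hw, hps, h0s]




/-- The standard part of an element of an ordered field extension of `ℝ`. -/
noncomputable def stPart {K : Type*} [Field K] [LinearOrder K] [IsStrictOrderedRing K] (ι : ℝ →+* K) (b : K) : ℝ :=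
  sInf {a : ℝ | b ≤ ι a}

/-- `U` is approximately conditionally independent of `V` given `V'` w.r.t. `ν`:
if `ν(U ∩ V') ≠ 0` then `st(ν(V | U ∩ V')) = st(ν(V | V'))`. -/
def ApproxCondIndep {W K : Type*} [Field K] [LinearOrder K] [IsStrictOrderedRing K] (ι : ℝ →+* K)
    (ν : Set W → K) (U V V' : Set W) : Prop :=
  ν (U ∩ V') ≠ 0 →
    stPart ι (ν (V ∩ (U ∩ V')) / ν (U ∩ V')) = stPart ι (ν (V ∩ V') / ν V')

/-- Approximate conditional independence is invariant under expectation-equivalence: if `U`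
is approximately conditionally independent of `V` given `V'` with respect to `ν₁`, and
`ν₁ ≈ ν₂`, then the same holds with respect to `ν₂`. -/
theorem stmt17 {W : Type*} {F : Set (Set W)}
    {K₁ K₂ : Type*} [Field K₁] [LinearOrder K₁] [IsStrictOrderedRing K₁]
    [Field K₂] [LinearOrder K₂] [IsStrictOrderedRing K₂]
    (ι₁ : ℝ →+* K₁) (hι₁ : Monotone ι₁)
    (hna₁ : ∃ η : K₁, 0 < η ∧ ∀ r : ℝ, 0 < r → η < ι₁ r)
    (ι₂ : ℝ →+* K₂) (hι₂ : Monotone ι₂)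
    (hna₂ : ∃ η : K₂, 0 < η ∧ ∀ r : ℝ, 0 < r → η < ι₂ r)
    (huniv : Set.univ ∈ F) (hcompl : ∀ U ∈ F, Uᶜ ∈ F)
    (hunion : ∀ U ∈ F, ∀ V ∈ F, U ∪ V ∈ F) (hinter : ∀ U ∈ F, ∀ V ∈ F, U ∩ V ∈ F)
    (ν₁ : Set W → K₁) (ν₂ : Set W → K₂)
    (hν₁nn : ∀ U ∈ F, 0 ≤ ν₁ U) (hν₁tot : ν₁ Set.univ = 1)
    (hν₁add : ∀ U ∈ F, ∀ V ∈ F, Disjoint U V → ν₁ (U ∪ V) = ν₁ U + ν₁ V)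
    (hν₂nn : ∀ U ∈ F, 0 ≤ ν₂ U) (hν₂tot : ν₂ Set.univ = 1)
    (hν₂add : ∀ U ∈ F, ∀ V ∈ F, Disjoint U V → ν₂ (U ∪ V) = ν₂ U + ν₂ V)
    (hequiv : ∀ X Y : W → ℝ, (∀ x, X ⁻¹' {x} ∈ F) → (∀ x, Y ⁻¹' {x} ∈ F) →
      ∀ s : Finset ℝ, Set.range X ⊆ ↑s → Set.range Y ⊆ ↑s →
        ((∑ x ∈ s, ι₁ x * ν₁ (X ⁻¹' {x})) ≤ (∑ x ∈ s, ι₁ x * ν₁ (Y ⁻¹' {x})) ↔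
         (∑ x ∈ s, ι₂ x * ν₂ (X ⁻¹' {x})) ≤ (∑ x ∈ s, ι₂ x * ν₂ (Y ⁻¹' {x}))))
    (U V V' : Set W) (hU : U ∈ F) (hV : V ∈ F) (hV' : V' ∈ F)
    (hind : ApproxCondIndep ι₁ ν₁ U V V') :
    ApproxCondIndep ι₂ ν₂ U V V' := by
  intro hC2
  have hempty : (∅ : Set W) ∈ F := by simpa using hcompl _ huniv
  have hν₁e : ν₁ ∅ = 0 := by
    have h := hν₁add ∅ hempty ∅ hempty (by simp)
    simp at h; linarith
  have hν₂e : ν₂ ∅ = 0 := by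
    have h := hν₂add ∅ hempty ∅ hempty (by simp)
    simp at h; linarith
  have transfer : ∀ A ∈ F, ∀ B ∈ F, ∀ p q : ℝ,
      (ι₁ p * ν₁ A ≤ ι₁ q * ν₁ B ↔ ι₂ p * ν₂ A ≤ ι₂ q * ν₂ B) := by
    intro A hA B hB p q
    have hps : p ∈ ({p, q, 0} : Finset ℝ) := by simp
    have hqs : q ∈ ({p, q, 0} : Finset ℝ) := by simp
    have h0s : (0:ℝ) ∈ ({p, q, 0} : Finset ℝ) := by simp
    have h := hequiv (fun w => if w ∈ A then p else 0) (fun w => if w ∈ B then q else 0)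
      (ind_preimage_mem huniv hcompl hunion hA p)
      (ind_preimage_mem huniv hcompl hunion hB q)
      {p, q, 0} (ind_range A p _ hps h0s) (ind_range B q _ hqs h0s)
    rwa [sum_ind ι₁ ν₁ hν₁e A p _ hps, sum_ind ι₁ ν₁ hν₁e B q _ hqs,
      sum_ind ι₂ ν₂ hν₂e A p _ hps, sum_ind ι₂ ν₂ hν₂e B q _ hqs] at h
  set C := U ∩ V' with hCdef
  have hCF : C ∈ F := hinter U hU V' hV'
  have hC2pos : 0 < ν₂ C := lt_of_le_of_ne (hν₂nn _ hCF) (Ne.symm hC2)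
  have ht := transfer C hCF Set.univ huniv 1 0
  simp only [map_one, map_zero, one_mul, zero_mul] at ht
  have hC1pos : 0 < ν₁ C := by
    rcases lt_or_eq_of_le (hν₁nn _ hCF) with h | h
    · exact h
    · exfalso
      have : ν₂ C ≤ 0 := ht.mp (le_of_eq h.symm)
      linarith
  -- monotonicity: ν C ≤ ν V'
  have hUc : Uᶜ ∩ V' ∈ F := hinter _ (hcompl _ hU) _ hV'
  have hsplit : V' = C ∪ (Uᶜ ∩ V') := by
    ext w; by_cases hw : w ∈ U <;> simp [hCdef, hw]
  have hdisj : Disjoint C (Uᶜ ∩ V') := by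
    rw [Set.disjoint_left]; rintro w ⟨hwU, _⟩ ⟨hwUc, _⟩; exact hwUc hwU
  have hD1pos : 0 < ν₁ V' := by
    have h := hν₁add C hCF _ hUc hdisj
    rw [← hsplit] at h
    have := hν₁nn _ hUc
    linarith
  have hD2pos : 0 < ν₂ V' := by
    have h := hν₂add C hCF _ hUc hdisj
    rw [← hsplit] at h
    have := hν₂nn _ hUc
    linarith
  have key : ∀ E ∈ F, ∀ D ∈ F, 0 < ν₁ D → 0 < ν₂ D →
      stPart ι₁ (ν₁ E / ν₁ D) = stPart ι₂ (ν₂ E / ν₂ D) := by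
    intro E hE D hD h1 h2
    unfold stPart
    congr 1
    ext a
    simp only [Set.mem_setOf_eq]
    rw [div_le_iff₀ h1, div_le_iff₀ h2]
    have := transfer E hE D hD 1 a
    simpa [map_one] using this
  have hC1 : ν₁ C ≠ 0 := ne_of_gt hC1pos
  have h1 := hind hC1
  rw [← key (V ∩ (U ∩ V')) (hinter V hV _ hCF) (U ∩ V') hCF hC1pos hC2pos,
    ← key (V ∩ V') (hinter V hV V' hV') V' hV' hD1pos hD2pos]
  exact h1
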